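/- (Observation 2) Let F be a convex set of d×d density matrices and ρ a d×d density matrix such that there exist σ ∈ F and λ > 0 with ρ ≤ λ·σ (so that all quantities below are finite). Define the max-relative entropy D_max(ρ‖σ) := log inf { λ ∈ (0,∞) : ρ ≤ λ·σ } for those σ for which some such λ exists, and the max entropy of ρ with respect to F as E_max(ρ) := inf { D_max(ρ‖σ) : σ ∈ F and ∃ λ > 0 with ρ ≤ λ·σ }. Then E_max(ρ) = log(1 + R_F(ρ)). -/

import Mathlib

open scoped ENNReal NNReal ComplexOrder

/-- A density matrix: a positive semidefinite complex matrix of trace one. -/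
def IsDensity {d : ℕ} (ρ : Matrix (Fin d) (Fin d) ℂ) : Prop :=
  ρ.PosSemidef ∧ ρ.trace = 1

/-- The generalized robustness of a state `ρ` w.r.t. a free set `F`:
the infimum of those `t ≥ 0` for which there are a density matrix `τ` and `σ ∈ F`
with `ρ + t • τ = (1 + t) • σ`, with `inf ∅ = ∞`. -/
noncomputable def Rgen {d : ℕ} (F : Set (Matrix (Fin d) (Fin d) ℂ))
    (ρ : Matrix (Fin d) (Fin d) ℂ) : ℝ≥0∞ :=
  ⨅ t ∈ {t : ℝ≥0 | ∃ τ, IsDensity τ ∧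
      ∃ σ ∈ F, ρ + (t : ℝ) • τ = ((1 : ℝ) + (t : ℝ)) • σ}, (t : ℝ≥0∞)

/-- The max-relative entropy `D_max(ρ‖σ) = log inf {λ > 0 | ρ ≤ λ • σ}`. -/
noncomputable def Dmax {d : ℕ} (ρ σ : Matrix (Fin d) (Fin d) ℂ) : ℝ :=
  Real.log (sInf {l : ℝ | 0 < l ∧ (l • σ - ρ).PosSemidef})

section Aux

open scoped Matrix

lemma aux_psd_add {d : ℕ} {A B : Matrix (Fin d) (Fin d) ℂ} (hA : A.PosSemidef)
    (hB : B.PosSemidef) : (A + B).PosSemidef :=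
  Matrix.PosSemidef.of_dotProduct_mulVec_nonneg (hA.1.add hB.1) fun x => by
    rw [Matrix.add_mulVec, dotProduct_add]
    exact add_nonneg (hA.dotProduct_mulVec_nonneg x) (hB.dotProduct_mulVec_nonneg x)

lemma aux_real_smul {d : ℕ} (c : ℝ) (A : Matrix (Fin d) (Fin d) ℂ) : c • A = (c : ℂ) • A := by
  ext i j
  simp [Matrix.smul_apply, Complex.real_smul]

lemma aux_psd_smul {d : ℕ} {c : ℝ} (hc : 0 ≤ c) {A : Matrix (Fin d) (Fin d) ℂ}
    (hA : A.PosSemidef) : (c • A).PosSemidef := by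
  rw [aux_real_smul]
  refine Matrix.PosSemidef.of_dotProduct_mulVec_nonneg ?_ ?_
  · show ((c : ℂ) • A)ᴴ = (c : ℂ) • A
    rw [Matrix.conjTranspose_smul, hA.1.eq]
    congr 1
    simp [Complex.star_def, Complex.conj_ofReal]
  · intro x
    rw [Matrix.smul_mulVec, dotProduct_smul, smul_eq_mul]
    refine mul_nonneg ?_ (hA.dotProduct_mulVec_nonneg x)
    exact_mod_cast hc

lemma aux_psd_trace_nonneg {d : ℕ} {A : Matrix (Fin d) (Fin d) ℂ} (hA : A.PosSemidef) :
    0 ≤ A.trace := by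
  have h : ∀ i, 0 ≤ A i i := by
    intro i
    have h2 := hA.dotProduct_mulVec_nonneg (Pi.single i 1)
    simpa [dotProduct, Matrix.mulVec, Pi.single_apply, mul_ite, ite_mul,
      Finset.sum_ite_eq, Finset.sum_ite_eq'] using h2
  rw [Matrix.trace]
  exact Finset.sum_nonneg fun i _ => h i

end Aux

/-- Observation 2: the max entropy of `ρ` w.r.t. the free set `F` equals
`log (1 + R_F(ρ))`. -/
theorem emax_eq_log_one_add_rgen {d : ℕ} (F : Set (Matrix (Fin d) (Fin d) ℂ))
    (hF : Convex ℝ F) (hFd : ∀ σ ∈ F, IsDensity σ)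
    (ρ : Matrix (Fin d) (Fin d) ℂ) (hρ : IsDensity ρ)
    (hex : ∃ σ ∈ F, ∃ l : ℝ, 0 < l ∧ (l • σ - ρ).PosSemidef) :
    sInf (Dmax ρ '' {σ | σ ∈ F ∧ ∃ l : ℝ, 0 < l ∧ (l • σ - ρ).PosSemidef}) =
      Real.log (1 + (Rgen F ρ).toReal) := by
  classical
  obtain ⟨σ₀, hσ₀F, l₀, hl₀pos, hl₀⟩ := hex
  set G : Set (Matrix (Fin d) (Fin d) ℂ) :=
    {σ | σ ∈ F ∧ ∃ l : ℝ, 0 < l ∧ (l • σ - ρ).PosSemidef} with hGdef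
  set T : Set ℝ≥0 := {t : ℝ≥0 | ∃ τ, IsDensity τ ∧
      ∃ σ ∈ F, ρ + (t : ℝ) • τ = ((1 : ℝ) + (t : ℝ)) • σ} with hTdef
  have hRgen : Rgen F ρ = ⨅ t ∈ T, (t : ℝ≥0∞) := rfl
  -- any admissible l is at least 1
  have hge1 : ∀ σ ∈ F, ∀ l : ℝ, (l • σ - ρ).PosSemidef → 1 ≤ l := by
    intro σ hσ l hpsd
    have htr : (l • σ - ρ).trace = (l : ℂ) - 1 := by
      rw [Matrix.trace_sub, Matrix.trace_smul, (hFd σ hσ).2, hρ.2]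
      simp [Complex.real_smul]
    have h0 := aux_psd_trace_nonneg hpsd
    rw [htr] at h0
    have h1 : (1 : ℂ) ≤ (l : ℂ) := sub_nonneg.mp h0
    exact_mod_cast h1
  -- upward closedness
  have hup : ∀ σ ∈ F, ∀ l l' : ℝ, l ≤ l' → (l • σ - ρ).PosSemidef →
      (l' • σ - ρ).PosSemidef := by
    intro σ hσ l l' hll hpsd
    have heq : l' • σ - ρ = (l' - l) • σ + (l • σ - ρ) := by module
    rw [heq]
    exact aux_psd_add (aux_psd_smul (by linarith) (hFd σ hσ).1) hpsd
  -- from strict admissibility to robustness witnesses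
  have hmemT : ∀ σ ∈ F, ∀ l : ℝ, 1 < l → (l • σ - ρ).PosSemidef →
      ∃ t ∈ T, (t : ℝ) = l - 1 := by
    intro σ hσ l hl hpsd
    have ht : (0 : ℝ) < l - 1 := by linarith
    refine ⟨⟨l - 1, ht.le⟩, ?_, rfl⟩
    refine ⟨(l - 1)⁻¹ • (l • σ - ρ), ⟨aux_psd_smul (by positivity) hpsd, ?_⟩, σ, hσ, ?_⟩
    · rw [Matrix.trace_smul, Matrix.trace_sub, Matrix.trace_smul, (hFd σ hσ).2, hρ.2]
      simp only [Complex.real_smul, smul_eq_mul]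
      rw [mul_one]
      have hne : ((l : ℂ) - 1) ≠ 0 := sub_ne_zero.mpr (by exact_mod_cast hl.ne')
      field_simp
      simp [hne]
    · show ρ + (l - 1) • ((l - 1)⁻¹ • (l • σ - ρ)) = ((1 : ℝ) + (l - 1)) • σ
      rw [smul_smul, mul_inv_cancel₀ ht.ne', one_smul]
      have h1 : (1 : ℝ) + (l - 1) = l := by ring
      rw [h1]
      abel
  -- T is nonempty
  have hl₀1 : 1 ≤ l₀ := hge1 σ₀ hσ₀F l₀ hl₀
  obtain ⟨t₀, ht₀T, _⟩ := hmemT σ₀ hσ₀F (l₀ + 1) (by linarith)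
    (hup σ₀ hσ₀F l₀ (l₀ + 1) (by linarith) hl₀)
  -- Rgen is finite
  have hRle : ∀ t ∈ T, Rgen F ρ ≤ (t : ℝ≥0∞) := by
    intro t ht
    rw [hRgen]
    exact iInf₂_le t ht
  have hRne : Rgen F ρ ≠ ⊤ :=
    ne_top_of_le_ne_top ENNReal.coe_ne_top (hRle t₀ ht₀T)
  set r : ℝ := (Rgen F ρ).toReal with hrdef
  have hr0 : 0 ≤ r := ENNReal.toReal_nonneg
  have hrle : ∀ t ∈ T, r ≤ (t : ℝ) := by
    intro t ht
    have h1 := ENNReal.toReal_mono ENNReal.coe_ne_top (hRle t ht)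
    rwa [ENNReal.coe_toReal] at h1
  have happrox : ∀ ε : ℝ, 0 < ε → ∃ t ∈ T, (t : ℝ) < r + ε := by
    intro ε hε
    have hlt : Rgen F ρ < Rgen F ρ + ENNReal.ofReal ε :=
      ENNReal.lt_add_right hRne (ENNReal.ofReal_pos.mpr hε).ne'
    rw [hRgen] at hlt
    obtain ⟨t, ht⟩ := iInf_lt_iff.mp hlt
    obtain ⟨htT, hlt'⟩ := iInf_lt_iff.mp ht
    refine ⟨t, htT, ?_⟩
    have hfin : Rgen F ρ + ENNReal.ofReal ε ≠ ⊤ :=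
      ENNReal.add_ne_top.mpr ⟨hRne, ENNReal.ofReal_ne_top⟩
    have h2 : ((t : ℝ≥0∞)).toReal < (Rgen F ρ + ENNReal.ofReal ε).toReal :=
      (ENNReal.toReal_lt_toReal ENNReal.coe_ne_top hfin).mpr hlt'
    rwa [ENNReal.coe_toReal, ENNReal.toReal_add hRne ENNReal.ofReal_ne_top,
      ENNReal.toReal_ofReal hε.le] at h2
  -- from robustness witnesses back to admissible l's
  have hfromT : ∀ t : ℝ≥0, t ∈ T → ∃ σ ∈ G,
      (0 : ℝ) < 1 + (t : ℝ) ∧ (((1 : ℝ) + (t : ℝ)) • σ - ρ).PosSemidef := by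
    intro t ht
    obtain ⟨τ, hτ, σ, hσF, heq⟩ := ht
    have hpsd : (((1 : ℝ) + (t : ℝ)) • σ - ρ).PosSemidef := by
      have h1 : ((1 : ℝ) + (t : ℝ)) • σ - ρ = (t : ℝ) • τ := by
        rw [← heq]; abel
      rw [h1]
      exact aux_psd_smul t.coe_nonneg hτ.1
    have hpos : (0 : ℝ) < 1 + (t : ℝ) := by positivity
    exact ⟨σ, ⟨hσF, ⟨1 + (t : ℝ), hpos, hpsd⟩⟩, hpos, hpsd⟩
  -- the set of infima
  set f : Matrix (Fin d) (Fin d) ℂ → ℝ :=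
    fun σ => sInf {l : ℝ | 0 < l ∧ (l • σ - ρ).PosSemidef} with hfdef
  set A : Set ℝ := f '' G with hAdef
  have hSbdd : ∀ σ ∈ F, BddBelow {l : ℝ | 0 < l ∧ (l • σ - ρ).PosSemidef} := by
    intro σ hσ
    exact ⟨1, fun l hl => hge1 σ hσ l hl.2⟩
  have hA1 : ∀ a ∈ A, 1 ≤ a := by
    rintro a ⟨σ, ⟨hσF, lw, hlw, hlwpsd⟩, rfl⟩
    exact le_csInf ⟨lw, hlw, hlwpsd⟩ fun l hl => hge1 σ hσF l hl.2
  have hAne : A.Nonempty := ⟨f σ₀, ⟨σ₀, ⟨hσ₀F, l₀, hl₀pos, hl₀⟩, rfl⟩⟩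
  have hAbdd : BddBelow A := ⟨1, fun a ha => hA1 a ha⟩
  -- claim 1 : sInf A = 1 + r
  have le1 : 1 + r ≤ sInf A := by
    refine le_csInf hAne ?_
    rintro a ⟨σ, ⟨hσF, lw, hlw, hlwpsd⟩, rfl⟩
    refine le_csInf ⟨lw, hlw, hlwpsd⟩ ?_
    rintro l ⟨hl, hpsd⟩
    refine le_of_forall_pos_le_add ?_
    intro ε hε
    have h1 : 1 ≤ l := hge1 σ hσF l hpsd
    have hpsd' : ((l + ε) • σ - ρ).PosSemidef :=
      hup σ hσF l (l + ε) (by linarith) hpsd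
    obtain ⟨t, htT, htv⟩ := hmemT σ hσF (l + ε) (by linarith) hpsd'
    have h2 := hrle t htT
    rw [htv] at h2
    linarith
  have le2 : sInf A ≤ 1 + r := by
    refine le_of_forall_pos_le_add ?_
    intro ε hε
    obtain ⟨t, htT, htlt⟩ := happrox ε hε
    obtain ⟨σ, hσG, hpos, hpsd⟩ := hfromT t htT
    have hfσ : f σ ≤ 1 + (t : ℝ) := csInf_le (hSbdd σ hσG.1) ⟨hpos, hpsd⟩
    have h3 : sInf A ≤ f σ := csInf_le hAbdd ⟨σ, hσG, rfl⟩
    linarith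
  have claim1 : sInf A = 1 + r := le_antisymm le2 le1
  -- claim 2 : the image under log
  have hinfA1 : 1 ≤ sInf A := le_csInf hAne hA1
  have hinfA0 : 0 < sInf A := by linarith
  have hlogbdd : BddBelow (Real.log '' A) := by
    refine ⟨0, ?_⟩
    rintro x ⟨a, ha, rfl⟩
    exact Real.log_nonneg (hA1 a ha)
  have claim2 : sInf (Real.log '' A) = Real.log (sInf A) := by
    refine le_antisymm ?_ ?_
    · by_contra hcon
      push_neg at hcon
      have hlt : sInf A < Real.exp (sInf (Real.log '' A)) := by
        have h4 := Real.exp_lt_exp.mpr hcon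
        rwa [Real.exp_log hinfA0] at h4
      obtain ⟨a, haA, halt⟩ := exists_lt_of_csInf_lt hAne hlt
      have ha0 : 0 < a := by linarith [hA1 a haA]
      have h5 : Real.log a < sInf (Real.log '' A) := by
        have h6 := Real.log_lt_log ha0 halt
        rwa [Real.log_exp] at h6
      exact absurd (csInf_le hlogbdd ⟨a, haA, rfl⟩) (not_le.mpr h5)
    · refine le_csInf (hAne.image _) ?_
      rintro x ⟨a, ha, rfl⟩
      exact Real.log_le_log hinfA0 (csInf_le hAbdd ha)
  -- conclude
  have himg : Dmax ρ '' G = Real.log '' A := by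
    rw [hAdef, Set.image_image]
    rfl
  calc sInf (Dmax ρ '' G) = sInf (Real.log '' A) := by rw [himg]
    _ = Real.log (sInf A) := claim2
    _ = Real.log (1 + r) := by rw [claim1]
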